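/- Let u satisfy the standing assumptions (continuous, non-decreasing, locally nonsatiated, quasi-concave) and v be its indirect utility. Fix B > 0, an allocation x ∈ ℝ^m_{≥0}, and a price vector p ∈ ℝ^m_{≥0} with ⟨p, x⟩ ≤ B. Then x maximizes u over the budget set {y ≥ 0 : ⟨p, y⟩ ≤ B} if and only if p minimizes q ↦ v(q, B) over the set {q ≥ 0 : ⟨x, q⟩ ≤ B}. -/

import Mathlib

theorem stmt1 {m : ℕ} (u : (Fin m → ℝ) → ℝ)
    (hnn : ∀ x : Fin m → ℝ, 0 ≤ x → 0 ≤ u x)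
    (hcont : ContinuousOn u {x : Fin m → ℝ | 0 ≤ x})
    (hmono : ∀ x y : Fin m → ℝ, 0 ≤ y → y ≤ x → u y ≤ u x)
    (hlns : ∀ x : Fin m → ℝ, 0 ≤ x → ∀ ε : ℝ, 0 < ε →
      ∃ y : Fin m → ℝ, 0 ≤ y ∧ ‖x - y‖ ≤ ε ∧ u x < u y)
    (hqc : ∀ α : ℝ, Convex ℝ {x : Fin m → ℝ | 0 ≤ x ∧ α ≤ u x})
    (v : (Fin m → ℝ) → ℝ → ℝ)
    (hv : ∀ p : Fin m → ℝ, ∀ B : ℝ, 0 ≤ p → 0 < B →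
      IsLUB {t : ℝ | ∃ y : Fin m → ℝ, 0 ≤ y ∧ ∑ j, p j * y j ≤ B ∧ u y = t} (v p B))
    (B : ℝ) (hB : 0 < B) (x : Fin m → ℝ) (hx : 0 ≤ x)
    (p : Fin m → ℝ) (hp : 0 ≤ p) (hpx : ∑ j, p j * x j ≤ B) :
    (∀ y : Fin m → ℝ, 0 ≤ y → ∑ j, p j * y j ≤ B → u y ≤ u x) ↔
    (∀ q : Fin m → ℝ, 0 ≤ q → ∑ j, x j * q j ≤ B → v p B ≤ v q B) := by
  constructor
  · intro hmax q hq hxq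
    have hlubp := hv p B hp hB
    have hlubq := hv q B hq hB
    have h1 : u x ≤ v q B := by
      refine hlubq.1 ⟨x, hx, ?_, rfl⟩
      calc ∑ j, q j * x j = ∑ j, x j * q j := by simp [mul_comm]
        _ ≤ B := hxq
    have h2 : v p B ≤ u x := by
      refine hlubp.2 ?_
      rintro t ⟨y, hy, hby, rfl⟩
      exact hmax y hy hby
    linarith
  · intro hmin y₀ hy₀ hby₀
    by_contra hcon
    push_neg at hcon
    set c : ℝ := (u x + u y₀) / 2 with hc
    have hcx : u x < c := by rw [hc]; linarith
    have hcy : c < u y₀ := by rw [hc]; linarith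
    set S : Set (Fin m → ℝ) := {y | 0 ≤ y ∧ c ≤ u y} with hS
    have hSconv : Convex ℝ S := hqc c
    have hSclosed : IsClosed S := by
      have hrw : S = {y : Fin m → ℝ | 0 ≤ y} ∩ u ⁻¹' (Set.Ici c) := by
        ext y; simp [hS, Set.mem_setOf_eq]
      rw [hrw]
      refine hcont.preimage_isClosed_of_isClosed ?_ isClosed_Ici
      have : {y : Fin m → ℝ | 0 ≤ y} = Set.Ici 0 := rfl
      rw [this]; exact isClosed_Ici
    have hxS : x ∉ S := fun h => absurd h.2 (not_le.mpr hcx)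
    obtain ⟨f, s₀, hfx, hfS⟩ := geometric_hahn_banach_point_closed hSconv hSclosed hxS
    have hy₀S : y₀ ∈ S := ⟨hy₀, le_of_lt hcy⟩
    set a : Fin m → ℝ := fun j => f (Pi.single j 1) with ha
    have hfa : ∀ z : Fin m → ℝ, f z = ∑ j, z j * a j := by
      intro z
      have hz : z = ∑ j, Pi.single j (z j) := by
        funext i
        simp [Finset.sum_apply, Pi.single_apply]
      conv_lhs => rw [hz]
      rw [map_sum]
      refine Finset.sum_congr rfl fun j _ => ?_
      have hsj : (Pi.single j (z j) : Fin m → ℝ) = z j • (Pi.single j (1:ℝ) : Fin m → ℝ) := by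
        funext i
        simp [Pi.single_apply, mul_ite]
      rw [hsj, map_smul]; simp [ha, smul_eq_mul]
    have hann : ∀ j, 0 ≤ a j := by
      intro j
      by_contra hneg
      push_neg at hneg
      set t : ℝ := (f y₀ - s₀) / (-(a j)) with htdef
      have hfy₀ : s₀ < f y₀ := hfS y₀ hy₀S
      have ht : 0 < t := div_pos (by linarith) (by linarith)
      have hmem : y₀ + t • (Pi.single j (1:ℝ) : Fin m → ℝ) ∈ S := by
        constructor
        · intro i
          have h1 : 0 ≤ y₀ i := hy₀ i
          have h2 : (0:ℝ) ≤ (t • (Pi.single j (1:ℝ) : Fin m → ℝ)) i := by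
            simp only [Pi.smul_apply, smul_eq_mul, Pi.single_apply]
            positivity
          simp only [Pi.add_apply, Pi.zero_apply]
          linarith
        · refine le_trans hy₀S.2 (hmono _ y₀ hy₀ ?_)
          intro i
          have h2 : (0:ℝ) ≤ (t • (Pi.single j (1:ℝ) : Fin m → ℝ)) i := by
            simp only [Pi.smul_apply, smul_eq_mul, Pi.single_apply]
            positivity
          simp only [Pi.add_apply]
          linarith
      have := hfS _ hmem
      rw [map_add, map_smul] at this
      have hval : f y₀ + t • f (Pi.single j 1) = f y₀ + t * a j := by
        simp [ha, smul_eq_mul]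
      rw [hval] at this
      have htval : t * a j = -(f y₀ - s₀) := by
        have h5 : -a j ≠ 0 := ne_of_gt (by linarith)
        rw [htdef]
        field_simp
        ring_nf
        simp [ne_of_lt hneg]
      rw [htval] at this
      linarith
    have hfxnn : 0 ≤ f x := by
      rw [hfa]
      exact Finset.sum_nonneg fun j _ => mul_nonneg (hx j) (hann j)
    have hs₀ : 0 < s₀ := lt_of_le_of_lt hfxnn hfx
    set q : Fin m → ℝ := fun j => (B / s₀) * a j with hqdef
    have hqnn : 0 ≤ q := fun j => mul_nonneg (le_of_lt (div_pos hB hs₀)) (hann j)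
    have hxqle : ∑ j, x j * q j ≤ B := by
      have : ∑ j, x j * q j = (B / s₀) * f x := by
        rw [hfa, Finset.mul_sum]
        refine Finset.sum_congr rfl fun j _ => by rw [hqdef]; ring
      rw [this]
      calc (B / s₀) * f x ≤ (B / s₀) * s₀ :=
            mul_le_mul_of_nonneg_left (le_of_lt hfx) (le_of_lt (div_pos hB hs₀))
        _ = B := div_mul_cancel₀ B (ne_of_gt hs₀)
    have hvq : v q B ≤ c := by
      refine (hv q B hqnn hB).2 ?_
      rintro t ⟨y, hy, hby, rfl⟩
      by_contra hyc
      push_neg at hyc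
      have hyS : y ∈ S := ⟨hy, le_of_lt hyc⟩
      have hfy : s₀ < f y := hfS y hyS
      have : f y ≤ s₀ := by
        rw [hfa]
        have h1 : ∑ j, q j * y j = (B / s₀) * ∑ j, y j * a j := by
          rw [Finset.mul_sum]
          refine Finset.sum_congr rfl fun j _ => by rw [hqdef]; ring
        rw [h1] at hby
        have hBs : 0 < B / s₀ := div_pos hB hs₀
        have h2 := (le_div_iff₀' hBs).mpr hby
        have h3 : B / (B / s₀) = s₀ := by field_simp
        rwa [h3] at h2
      linarith
    have hvplb : u y₀ ≤ v p B := (hv p B hp hB).1 ⟨y₀, hy₀, hby₀, rfl⟩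
    have := hmin q hqnn hxqle
    linarith
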